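/- Correctness of T consecutive homomorphic additions (scalar form): Let q and t be positive integers with t dividing q and Λ = q/t. Let T be a positive integer, let e_1, …, e_T be integers with |e_i| ≤ C for every i, and let x be an integer. If 2·t·T·C < q, then the nearest-integer rounding of the rational number t·(Λ·x + Σ_{i=1}^T e_i)/q equals x. (This is the paper's claim that T homomorphic additions of ciphertexts with per-ciphertext noise bound C decrypt correctly as long as the accumulated noise T·C stays below q/(2t).) -/

import Mathlib

/-- Correctness of `T` consecutive homomorphic additions (scalar form): if `t ∣ q`,
`Λ = q / t`, each noise term satisfies `|e i| ≤ C`, and `2 * t * T * C < q`, then the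
nearest-integer rounding of `t * (Λ*x + ∑ i, e i) / q` equals `x`. -/
theorem bfv_T_additions_correct (q t : ℤ) (ht : 0 < t) (hq : 0 < q)
    (hdvd : t ∣ q) (Λ : ℤ) (hΛ : Λ = q / t)
    (T : ℕ) (hT : 0 < T) (e : Fin T → ℤ) (C : ℤ) (hC : ∀ i, |e i| ≤ C)
    (x : ℤ) (hbound : 2 * t * (T : ℤ) * C < q) :
    round ((t * (Λ * x + ∑ i, e i) : ℚ) / (q : ℚ)) = x := by
  have htΛ : t * Λ = q := by
    rw [hΛ]; exact Int.mul_ediv_cancel' hdvd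
  set E : ℤ := ∑ i, e i with hE
  have hEbound : |E| ≤ (T : ℤ) * C := by
    calc |E| ≤ ∑ i, |e i| := Finset.abs_sum_le_sum_abs _ _
    _ ≤ ∑ _i : Fin T, C := Finset.sum_le_sum fun i _ => hC i
    _ = (T : ℤ) * C := by simp [mul_comm]
  have hq' : (q : ℚ) ≠ 0 := by exact_mod_cast hq.ne'
  have htΛQ : (t : ℚ) * Λ = q := by exact_mod_cast htΛ
  have key : (t * (Λ * x + E) : ℚ) / (q : ℚ) = (x : ℚ) + (t * E : ℚ) / q := by
    field_simp
    linear_combination (x : ℚ) * htΛQ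
  rw [key, round_intCast_add]
  have h0 : round ((t * E : ℚ) / q) = 0 := by
    rw [round_eq_zero_iff]
    have habs : |(t * E : ℚ) / q| < 1 / 2 := by
      rw [abs_div, abs_of_pos (by exact_mod_cast hq : (0:ℚ) < q), div_lt_iff₀ (by exact_mod_cast hq)]
      have h2 : |(t * E : ℚ)| = ((|t * E| : ℤ) : ℚ) := by push_cast [abs_mul]; ring
      rw [h2]
      have : |t * E| * 2 < q := by
        have h1 : |t * E| ≤ t * ((T : ℤ) * C) := by
          rw [abs_mul, abs_of_pos ht]
          exact mul_le_mul_of_nonneg_left hEbound ht.le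
        nlinarith
      have : ((|t * E| * 2 : ℤ) : ℚ) < q := by exact_mod_cast this
      push_cast at this
      linarith
    rw [abs_lt] at habs
    constructor <;> [linarith [habs.1]; linarith [habs.2]]
  rw [h0, add_zero]
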